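/- Let P be a symmetric n×n matrix over ℤ₂. Then P is a trace-Kerdock matrix (i.e., there exists α ∈ 𝔽(2ⁿ) with P = K_α) if and only if for all x, y, z ∈ 𝔽(2ⁿ) one has [x]ᵀP[yz] = [xy]ᵀP[z]. -/

import Mathlib

open Matrix

set_option maxHeartbeats 1600000 in
/-- Let P be a symmetric n×n matrix over ℤ₂.  Then P is a trace-Kerdock
matrix (there exists α ∈ 𝔽(2ⁿ) with P = K_α, i.e. the entries of P viewed in 𝔽(2ⁿ) are
tr(α·ξ^{j+k})) if and only if for all x, y, z ∈ 𝔽(2ⁿ) one has [x]ᵀP[yz] = [xy]ᵀP[z],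
where [x] is the coordinate vector of x in the basis {1, ξ, …, ξ^{n−1}}. -/
theorem stmt_7 (n : ℕ) (hn : 1 ≤ n) (h : Polynomial (ZMod 2))
    (hmonic : h.Monic) (hdeg : h.natDegree = n) (hirr : Irreducible h)
    (hprim : orderOf (AdjoinRoot.root h) = 2 ^ n - 1)
    (coord : AdjoinRoot h → Fin n → ZMod 2)
    (hcoord : ∀ x : AdjoinRoot h,
        x = ∑ j : Fin n,
          algebraMap (ZMod 2) (AdjoinRoot h) (coord x j) * (AdjoinRoot.root h) ^ (j : ℕ))
    (P : Matrix (Fin n) (Fin n) (ZMod 2)) (hP : P.IsSymm) :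
    (∃ α : AdjoinRoot h, ∀ j k : Fin n,
        algebraMap (ZMod 2) (AdjoinRoot h) (P j k)
          = ∑ i ∈ Finset.range n, (α * (AdjoinRoot.root h) ^ ((j : ℕ) + (k : ℕ))) ^ (2 ^ i))
    ↔ (∀ x y z : AdjoinRoot h,
        coord x ⬝ᵥ P.mulVec (coord (y * z)) = coord (x * y) ⬝ᵥ P.mulVec (coord z)) := by
  haveI : Fact (Irreducible h) := ⟨hirr⟩
  set ξ := AdjoinRoot.root h with hξdef
  set φ : ZMod 2 →+* AdjoinRoot h := algebraMap (ZMod 2) (AdjoinRoot h) with hφdef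
  have hφinj : Function.Injective φ := φ.injective
  haveI : CharP (AdjoinRoot h) 2 := charP_of_injective_algebraMap hφinj 2
  -- the basis of powers of ξ
  let pb := AdjoinRoot.powerBasis' hmonic
  have hdim : pb.dim = n := by
    rw [AdjoinRoot.powerBasis'_dim, hdeg]
  let b : Module.Basis (Fin n) (ZMod 2) (AdjoinRoot h) := pb.basis.reindex (finCongr hdim)
  have hb : ∀ j : Fin n, b j = ξ ^ (j : ℕ) := by
    intro j
    rw [show b j = pb.basis ((finCongr hdim).symm j) from Module.Basis.reindex_apply _ _ _,
      pb.basis_eq_pow]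
    simp [pb, AdjoinRoot.powerBasis'_gen, hξdef]
  have hcrepr : ∀ x, coord x = ⇑(b.repr x) := by
    intro x
    have hx : x = ∑ j : Fin n, coord x j • b j := by
      conv_lhs => rw [hcoord x]
      refine Finset.sum_congr rfl fun j _ => ?_
      rw [hb, Algebra.smul_def]
    conv_rhs => rw [hx]
    rw [b.repr_sum_self]
  -- the trace function
  set T : AdjoinRoot h → AdjoinRoot h := fun u => ∑ i ∈ Finset.range n, u ^ 2 ^ i with hTdef
  have hT_add : ∀ u v, T (u + v) = T u + T v := by
    intro u v
    simp only [hTdef, add_pow_char_pow, Finset.sum_add_distrib]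
  have hz2 : ∀ c : ZMod 2, c * c = c := by decide
  have hzpow : ∀ (c : ZMod 2) (m : ℕ), c ^ (m + 1) = c := by
    intro c m
    induction m with
    | zero => simp
    | succ k ih => rw [pow_succ, ih, hz2]
  have hφpow : ∀ (c : ZMod 2) (i : ℕ), (φ c) ^ 2 ^ i = φ c := by
    intro c i
    rw [← map_pow]
    congr 1
    have h1 : 2 ^ i = (2 ^ i - 1) + 1 := by
      have := Nat.one_le_two_pow (n := i); omega
    rw [h1, hzpow]
  have hT_smul : ∀ (c : ZMod 2) (u : AdjoinRoot h), T (φ c * u) = φ c * T u := by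
    intro c u
    simp only [hTdef, mul_pow, hφpow, Finset.mul_sum]
  have hTsum : ∀ {ι : Type} (s : Finset ι) (f : ι → AdjoinRoot h),
      T (∑ i ∈ s, f i) = ∑ i ∈ s, T (f i) := by
    intro ι s f
    exact map_sum (AddMonoidHom.mk' T hT_add) f s
  -- finiteness
  haveI : Fintype (AdjoinRoot h) := Module.fintypeOfFintype b
  have hcardF : Fintype.card (AdjoinRoot h) = 2 ^ n := by
    rw [Module.card_fintype b, ZMod.card, Fintype.card_fin]
  have hpow_card : ∀ u : AdjoinRoot h, u ^ 2 ^ n = u := by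
    intro u; rw [← hcardF]; exact FiniteField.pow_card u
  have hT_sq : ∀ u, T u * T u = T u := by
    intro u
    have h1 : T u * T u = ∑ i ∈ Finset.range n, u ^ 2 ^ (i + 1) := by
      rw [← pow_two, hTdef]
      rw [sum_pow_char]
      refine Finset.sum_congr rfl fun i _ => ?_
      rw [← pow_mul, ← pow_succ]
    have h3 := Finset.sum_range_succ' (fun i => u ^ 2 ^ i) n
    have h4 := Finset.sum_range_succ (fun i => u ^ 2 ^ i) n
    simp only [pow_zero, pow_one] at h3
    rw [hpow_card u] at h4
    rw [h1, hTdef]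
    have h5 : (∑ i ∈ Finset.range n, u ^ 2 ^ (i + 1)) + u
        = (∑ i ∈ Finset.range n, u ^ 2 ^ i) + u := by
      rw [← h3, h4]
    exact add_right_cancel h5
  have hT01 : ∀ u, T u = 0 ∨ T u = 1 := by
    intro u
    have h5 : T u * (T u - 1) = 0 := by rw [mul_sub, hT_sq u, mul_one, sub_self]
    rcases mul_eq_zero.mp h5 with h6 | h6
    · exact Or.inl h6
    · exact Or.inr (sub_eq_zero.mp h6)
  set τ : AdjoinRoot h → ZMod 2 := fun u => if T u = 0 then 0 else 1 with hτdef
  have hτ : ∀ u, φ (τ u) = T u := by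
    intro u
    rcases hT01 u with h0 | h1
    · simp [hτdef, h0]
    · simp [hτdef, h1]
  -- the main computation
  have hmain : ∀ α : AdjoinRoot h,
      (∀ j k : Fin n, φ (P j k) = T (α * ξ ^ ((j : ℕ) + (k : ℕ)))) →
      ∀ x w : AdjoinRoot h,
        φ (coord x ⬝ᵥ P.mulVec (coord w)) = T (α * (x * w)) := by
    intro α hα x w
    have expand : coord x ⬝ᵥ P.mulVec (coord w)
        = ∑ j : Fin n, ∑ k : Fin n, coord x j * (coord w k * P j k) := by
      simp only [dotProduct, Matrix.mulVec, Finset.mul_sum]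
      exact Finset.sum_congr rfl fun j _ => Finset.sum_congr rfl fun k _ => by ring
    have hxw : α * (x * w) = ∑ j : Fin n, ∑ k : Fin n,
        φ (coord x j) * (φ (coord w k) * (α * ξ ^ ((j : ℕ) + (k : ℕ)))) := by
      conv_lhs => rw [hcoord x, hcoord w]
      rw [Finset.sum_mul_sum, Finset.mul_sum]
      refine Finset.sum_congr rfl fun j _ => ?_
      rw [Finset.mul_sum]
      refine Finset.sum_congr rfl fun k _ => ?_
      rw [pow_add]
      ring
    rw [expand, map_sum, hxw, hTsum]
    refine Finset.sum_congr rfl fun j _ => ?_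
    rw [map_sum, hTsum]
    refine Finset.sum_congr rfl fun k _ => ?_
    rw [hT_smul, hT_smul, ← hα j k, _root_.map_mul, _root_.map_mul]
  constructor
  · rintro ⟨α, hα⟩ x y z
    apply hφinj
    rw [hmain α hα x (y * z), hmain α hα (x * y) z, mul_assoc]
  · intro hB
    haveI : FiniteDimensional (ZMod 2) (AdjoinRoot h) := Module.Finite.of_basis b
    set c : Fin n → ZMod 2 := P.mulVec (coord 1) with hcdef
    set L : Module.Dual (ZMod 2) (AdjoinRoot h) := ∑ j : Fin n, c j • b.coord j with hLdef
    have hL : ∀ u, L u = coord u ⬝ᵥ P.mulVec (coord 1) := by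
      intro u
      rw [hLdef]
      simp only [LinearMap.coe_sum, Finset.sum_apply, LinearMap.smul_apply,
        Module.Basis.coord_apply, smul_eq_mul, dotProduct, hcrepr u]
      exact Finset.sum_congr rfl fun j _ => mul_comm _ _
    have hτadd : ∀ u v, τ (u + v) = τ u + τ v := by
      intro u v; apply hφinj; rw [map_add, hτ, hτ, hτ, hT_add]
    set Θfun : AdjoinRoot h → Module.Dual (ZMod 2) (AdjoinRoot h) := fun α =>
      AddMonoidHom.toZModLinearMap 2 (AddMonoidHom.mk' (fun u => τ (α * u)) (by
        intro u v
        show τ (α * (u + v)) = τ (α * u) + τ (α * v)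
        rw [mul_add]; exact hτadd _ _)) with hΘfundef
    set Θ : AdjoinRoot h →ₗ[ZMod 2] Module.Dual (ZMod 2) (AdjoinRoot h) :=
      AddMonoidHom.toZModLinearMap 2 (AddMonoidHom.mk' Θfun (by
        intro α β
        ext u
        show τ ((α + β) * u) = τ (α * u) + τ (β * u)
        rw [add_mul]; exact hτadd _ _)) with hΘdef
    have hΘapply : ∀ α u, Θ α u = τ (α * u) := fun _ _ => rfl
    have hΘinj : Function.Injective Θ := by
      rw [← LinearMap.ker_eq_bot, LinearMap.ker_eq_bot']
      intro α hα0
      by_contra hαne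
      have hall : ∀ v : AdjoinRoot h, T v = 0 := by
        intro v
        have h6 : Θ α (α⁻¹ * v) = 0 := by rw [hα0]; rfl
        rw [hΘapply, mul_inv_cancel_left₀ hαne] at h6
        rw [← hτ v, h6, map_zero]
      set p : Polynomial (AdjoinRoot h) := ∑ i ∈ Finset.range n, Polynomial.X ^ 2 ^ i
        with hpdef
      have hpne : p ≠ 0 := by
        intro hp0
        have hcoeff : p.coeff (2 ^ (n - 1)) = 1 := by
          rw [hpdef]
          simp only [Polynomial.finset_sum_coeff, Polynomial.coeff_X_pow]
          rw [Finset.sum_eq_single (n - 1)]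
          · simp
          · intro i hi hine
            rw [if_neg]
            intro he
            exact hine (Nat.pow_right_injective (le_refl 2) he.symm)
          · intro hnot
            exact absurd (Finset.mem_range.mpr (by omega)) hnot
        rw [hp0] at hcoeff
        simp at hcoeff
      have hdegp : (p.natDegree : Cardinal) < Cardinal.mk (AdjoinRoot h) := by
        have h1 : p.natDegree ≤ 2 ^ (n - 1) := by
          apply Polynomial.natDegree_sum_le_of_forall_le
          intro i hi
          rw [Polynomial.natDegree_X_pow]
          exact Nat.pow_le_pow_right (by norm_num) (by
            have := Finset.mem_range.mp hi; omega)
        have h2 : p.natDegree < 2 ^ n := by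
          calc p.natDegree ≤ 2 ^ (n - 1) := h1
            _ < 2 ^ n := Nat.pow_lt_pow_right (by norm_num) (by omega)
        rw [Cardinal.mk_fintype, hcardF]
        exact_mod_cast h2
      obtain ⟨v, hv⟩ :=
        Polynomial.exists_eval_ne_zero_of_natDegree_lt_card p hpne hdegp
      apply hv
      have heval : Polynomial.eval v p = T v := by
        rw [hpdef, hTdef]
        simp [Polynomial.eval_finset_sum]
      rw [heval]
      exact hall v
    have hsurj : Function.Surjective Θ := by
      have hrank : Module.finrank (ZMod 2) (AdjoinRoot h)
          = Module.finrank (ZMod 2) (Module.Dual (ZMod 2) (AdjoinRoot h)) :=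
        (Subspace.dual_finrank_eq).symm
      exact (LinearMap.injective_iff_surjective_of_finrank_eq_finrank hrank).mp hΘinj
    obtain ⟨α, hαL⟩ := hsurj L
    refine ⟨α, fun j k => ?_⟩
    have hτL : ∀ u, T (α * u) = φ (L u) := by
      intro u
      rw [← hτ (α * u)]
      congr 1
      rw [← hαL]
      rfl
    have hcpow : ∀ j : Fin n, coord (ξ ^ (j : ℕ)) = fun i => if i = j then 1 else 0 := by
      intro j
      rw [hcrepr, ← hb j, b.repr_self]
      funext i
      simp [Finsupp.single_apply, eq_comm]
    have hPjk : ∀ j k : Fin n, P j k = L (ξ ^ ((j : ℕ) + (k : ℕ))) := by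
      intro j k
      have hBjk := hB (ξ ^ (j : ℕ)) (ξ ^ (k : ℕ)) 1
      rw [mul_one, ← pow_add] at hBjk
      rw [hL, ← hBjk, hcpow j, hcpow k]
      simp [dotProduct, Matrix.mulVec, Finset.sum_ite_eq]
    show φ (P j k) = _
    rw [hPjk j k, ← hτL]
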